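/- arXiv:2207.12729 — 3 statements merged into one kernel-verified Lean document; each statement's English description precedes it below -/
import Mathlib

section
/- With the setting of the previous lemma, the map μ ↦ w*(μ) sending a Borel probability measure on X to the unique minimizer of J_μ on ℝ_{≥0}^N is continuous with respect to weak-* convergence of measures: if μ_n ⇀ μ weakly-*, then w*(μ_n) → w*(μ) in ℝ^N. -/
open MeasureTheory Filter Set

/-- The equilibrium potential J_μ(w) = Σᵢ πᵢ(wᵢ) + ∫_X R_σ(x,w) dμ(x), where
R_σ(x,w) = σ log(e^{w₀/σ} + Σᵢ e^{(wᵢ - cᵢ(x))/σ}). -/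
noncomputable def Jfun {d N : ℕ} (X : Set (EuclideanSpace ℝ (Fin d)))
    (c : Fin N → EuclideanSpace ℝ (Fin d) → ℝ) (w0 σ : ℝ) (π : Fin N → ℝ → ℝ)
    (μ : Measure X) (w : Fin N → ℝ) : ℝ :=
  ∑ i, π i (w i) +
    ∫ x, σ * Real.log (Real.exp (w0 / σ) + ∑ i, Real.exp ((w i - c i ↑x) / σ)) ∂μ

lemma lse_convexOn (N : ℕ) (σ A : ℝ) (hσ : 0 < σ) (hA : 0 < A) :
    ConvexOn ℝ univ (fun u : Fin N → ℝ => σ * Real.log (A + ∑ i, Real.exp (u i / σ))) := by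
  refine ⟨convex_univ, fun u _ v _ a b ha hb hab => ?_⟩
  rcases ha.eq_or_lt with ha0 | ha
  · have hb1 : b = 1 := by linarith
    simp [← ha0, hb1]
  rcases hb.eq_or_lt with hb0 | hb
  · have ha1 : a = 1 := by linarith
    simp [← hb0, ha1]
  have ha1 : a < 1 := by linarith
  set F : Option (Fin N) → ℝ := fun j => j.elim A (fun i => Real.exp (u i / σ)) with hF
  set G : Option (Fin N) → ℝ := fun j => j.elim A (fun i => Real.exp (v i / σ)) with hG
  have hFpos : ∀ j, 0 < F j := by rintro (_ | i) <;> simp [hF, hA, Real.exp_pos]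
  have hGpos : ∀ j, 0 < G j := by rintro (_ | i) <;> simp [hG, hA, Real.exp_pos]
  have hXpos : 0 < A + ∑ i, Real.exp (u i / σ) := by positivity
  have hYpos : 0 < A + ∑ i, Real.exp (v i / σ) := by positivity
  have hsumF : ∑ j : Option (Fin N), F j = A + ∑ i, Real.exp (u i / σ) := by
    rw [Fintype.sum_option]; rfl
  have hsumG : ∑ j : Option (Fin N), G j = A + ∑ i, Real.exp (v i / σ) := by
    rw [Fintype.sum_option]; rfl
  have step1 : A + ∑ i, Real.exp (((a • u + b • v) i) / σ)
      = ∑ j : Option (Fin N), F j ^ a * G j ^ b := by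
    rw [Fintype.sum_option]
    congr 1
    · simp only [hF, hG, Option.elim]
      rw [← Real.rpow_add hA, hab, Real.rpow_one]
    · refine Finset.sum_congr rfl fun i _ => ?_
      simp only [hF, hG, Option.elim, Pi.add_apply, Pi.smul_apply, smul_eq_mul]
      rw [Real.rpow_def_of_pos (Real.exp_pos _), Real.rpow_def_of_pos (Real.exp_pos _),
        Real.log_exp, Real.log_exp, ← Real.exp_add]
      congr 1
      field_simp
  have hpq : Real.HolderConjugate (1 / a) (1 / b) := by
    rw [Real.holderConjugate_iff]; constructor
    · rw [one_div]; exact (one_lt_inv₀ ha).2 ha1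
    · simp only [one_div, inv_inv]; exact hab
  have step2 : ∑ j : Option (Fin N), F j ^ a * G j ^ b
      ≤ (A + ∑ i, Real.exp (u i / σ)) ^ a * (A + ∑ i, Real.exp (v i / σ)) ^ b := by
    have h := Real.inner_le_Lp_mul_Lq_of_nonneg (s := Finset.univ)
      (f := fun j => F j ^ a) (g := fun j => G j ^ b) hpq
      (fun j _ => (Real.rpow_pos_of_pos (hFpos j) a).le)
      (fun j _ => (Real.rpow_pos_of_pos (hGpos j) b).le)
    have e1 : ∀ j : Option (Fin N), (F j ^ a) ^ (1 / a) = F j := fun j => by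
      rw [← Real.rpow_mul (hFpos j).le, mul_one_div_cancel ha.ne', Real.rpow_one]
    have e2 : ∀ j : Option (Fin N), (G j ^ b) ^ (1 / b) = G j := fun j => by
      rw [← Real.rpow_mul (hGpos j).le, mul_one_div_cancel hb.ne', Real.rpow_one]
    simp only [e1, e2, one_div_one_div] at h
    rwa [hsumF, hsumG] at h
  calc σ * Real.log (A + ∑ i, Real.exp (((a • u + b • v) i) / σ))
      ≤ σ * Real.log ((A + ∑ i, Real.exp (u i / σ)) ^ a
          * (A + ∑ i, Real.exp (v i / σ)) ^ b) := by
        apply mul_le_mul_of_nonneg_left _ hσ.le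
        apply Real.log_le_log (by positivity)
        rw [step1]; exact step2
    _ = a • (σ * Real.log (A + ∑ i, Real.exp (u i / σ)))
        + b • (σ * Real.log (A + ∑ i, Real.exp (v i / σ))) := by
        rw [Real.log_mul (Real.rpow_pos_of_pos hXpos a).ne' (Real.rpow_pos_of_pos hYpos b).ne',
          Real.log_rpow hXpos, Real.log_rpow hYpos]
        simp only [smul_eq_mul]; ring

lemma lse_le_shift (N : ℕ) (σ A : ℝ) (hσ : 0 < σ) (hA : 0 < A) (u v : Fin N → ℝ) (M : ℝ)
    (hM : 0 ≤ M) (h : ∀ i, u i ≤ v i + M) :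
    σ * Real.log (A + ∑ i, Real.exp (u i / σ)) ≤
      σ * Real.log (A + ∑ i, Real.exp (v i / σ)) + M := by
  have hY : 0 < A + ∑ i, Real.exp (v i / σ) := by positivity
  have h1 : A + ∑ i, Real.exp (u i / σ)
      ≤ Real.exp (M / σ) * (A + ∑ i, Real.exp (v i / σ)) := by
    have he : (1 : ℝ) ≤ Real.exp (M / σ) := Real.one_le_exp (by positivity)
    have hs : ∑ i, Real.exp (u i / σ) ≤ Real.exp (M / σ) * ∑ i, Real.exp (v i / σ) := by
      rw [Finset.mul_sum]
      refine Finset.sum_le_sum fun i _ => ?_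
      rw [← Real.exp_add, ← add_div]
      exact Real.exp_le_exp.2 ((div_le_div_iff_of_pos_right hσ).2 (by linarith [h i]))
    rw [mul_add]
    exact add_le_add (le_mul_of_one_le_left hA.le he) hs
  have h2 : Real.log (A + ∑ i, Real.exp (u i / σ))
      ≤ M / σ + Real.log (A + ∑ i, Real.exp (v i / σ)) := by
    have := Real.log_le_log (by positivity) h1
    rwa [Real.log_mul (Real.exp_pos _).ne' hY.ne', Real.log_exp] at this
  have := mul_le_mul_of_nonneg_left h2 hσ.le
  calc σ * Real.log (A + ∑ i, Real.exp (u i / σ))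
      ≤ σ * (M / σ + Real.log (A + ∑ i, Real.exp (v i / σ))) := this
    _ = σ * Real.log (A + ∑ i, Real.exp (v i / σ)) + M := by field_simp; ring

/-- the map μ ↦ w*(μ) sending a Borel probability measure on X to the unique
minimizer of J_μ is continuous for weak-* convergence: if μₙ ⇀ μ (i.e. ∫ f dμₙ → ∫ f dμ for
every continuous f on X), then w*(μₙ) → w*(μ). -/
theorem wstar_weak_star_continuous (d N : ℕ) (X : Set (EuclideanSpace ℝ (Fin d)))
    (hXc : IsCompact X) (hXpos : 0 < volume X)
    (c : Fin N → EuclideanSpace ℝ (Fin d) → ℝ) (hc : ∀ i, Continuous (c i))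
    (w0 σ : ℝ) (hw0 : 0 < w0) (hσ : 0 < σ)
    (π π' : Fin N → ℝ → ℝ)
    (hπconv : ∀ i, StrictConvexOn ℝ (Ioi 0) (π i))
    (hπanti : ∀ i, AntitoneOn (π i) (Ioi 0))
    (hπnonneg : ∀ i, ∀ v > (0 : ℝ), 0 ≤ π i v)
    (hπderiv : ∀ i, ∀ v > (0 : ℝ), HasDerivAt (π i) (π' i v) v)
    (hπ'cont : ∀ i, ContinuousOn (π' i) (Ioi 0))
    (hπblow : ∀ i, Tendsto (π i) (nhdsWithin 0 (Ioi 0)) atTop)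
    (ws : Measure X → (Fin N → ℝ))
    (hws : ∀ μ : Measure X, IsProbabilityMeasure μ →
      (∀ i, 0 < ws μ i) ∧ IsMinOn (Jfun X c w0 σ π μ) {v | ∀ i, 0 < v i} (ws μ))
    (μn : ℕ → Measure X) (μ : Measure X)
    (hμn : ∀ n, IsProbabilityMeasure (μn n)) (hμ : IsProbabilityMeasure μ)
    (hweak : ∀ f : C(X, ℝ),
      Tendsto (fun n => ∫ x, f x ∂(μn n)) atTop (nhds (∫ x, f x ∂μ))) :
    Tendsto (fun n => ws (μn n)) atTop (nhds (ws μ)) := by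
  haveI hXcs : CompactSpace X := isCompact_iff_compactSpace.mp hXc
  set A := Real.exp (w0 / σ) with hAdef
  have hApos : 0 < A := Real.exp_pos _
  set S : Set (Fin N → ℝ) := {v | ∀ i, 0 < v i} with hSdef
  set Rf : (Fin N → ℝ) → X → ℝ :=
    fun w x => σ * Real.log (A + ∑ i, Real.exp ((w i - c i ↑x) / σ)) with hRf
  have hJ : ∀ (ν : Measure X) (w : Fin N → ℝ),
      Jfun X c w0 σ π ν w = (∑ i, π i (w i)) + ∫ x, Rf w x ∂ν := fun ν w => rfl
  have hRc : ∀ w, Continuous (Rf w) := by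
    intro w
    have h1 : Continuous fun x : X => A + ∑ i, Real.exp ((w i - c i ↑x) / σ) :=
      continuous_const.add (continuous_finset_sum _ fun i _ =>
        ((continuous_const.sub ((hc i).comp continuous_subtype_val)).div_const σ).rexp)
    exact continuous_const.mul (h1.log fun x => by positivity)
  have hint : ∀ (ν : Measure X) [IsFiniteMeasure ν] (w : Fin N → ℝ), Integrable (Rf w) ν := by
    intro ν _ w
    exact (hRc w).integrable_of_hasCompactSupport ((isClosed_tsupport _).isCompact)
  have hRge : ∀ w x, w0 ≤ Rf w x := by
    intro w x
    have h0 : A ≤ A + ∑ i, Real.exp ((w i - c i ↑x) / σ) :=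
      le_add_of_nonneg_right (Finset.sum_nonneg fun i _ => (Real.exp_pos _).le)
    have h2 := mul_le_mul_of_nonneg_left (Real.log_le_log hApos h0) hσ.le
    calc w0 = σ * Real.log A := by rw [hAdef, Real.log_exp]; field_simp
      _ ≤ _ := h2
  have hRge2 : ∀ w (x : X) i, w i - c i ↑x ≤ Rf w x := by
    intro w x i
    have h1 : Real.exp ((w i - c i ↑x) / σ) ≤ A + ∑ j, Real.exp ((w j - c j ↑x) / σ) := by
      have h2 := Finset.single_le_sum (f := fun j => Real.exp ((w j - c j ↑x) / σ))
        (fun j _ => (Real.exp_pos _).le) (Finset.mem_univ i)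
      linarith
    have h3 := mul_le_mul_of_nonneg_left (Real.log_le_log (Real.exp_pos _) h1) hσ.le
    rw [Real.log_exp] at h3
    calc w i - c i ↑x = σ * ((w i - c i ↑x) / σ) := by field_simp
      _ ≤ _ := h3
  have hRlip : ∀ w v (x : X), |Rf w x - Rf v x| ≤ ∑ i, |w i - v i| := by
    intro w v x
    have hM : 0 ≤ ∑ i, |w i - v i| := Finset.sum_nonneg fun i _ => abs_nonneg _
    have hcoef : ∀ i, |w i - v i| ≤ ∑ j, |w j - v j| := fun i =>
      Finset.single_le_sum (f := fun j => |w j - v j|) (fun j _ => abs_nonneg _)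
        (Finset.mem_univ i)
    have key : ∀ p q : Fin N → ℝ, (∀ i, p i ≤ q i + ∑ j, |w j - v j|) →
        Rf p x ≤ Rf q x + ∑ j, |w j - v j| := fun p q h =>
      lse_le_shift N σ A hσ hApos (fun i => p i - c i ↑x) (fun i => q i - c i ↑x) _ hM
        (fun i => by have := h i; linarith)
    rw [abs_sub_le_iff]
    constructor
    · have h := key w v fun i => by
        have h1 := le_abs_self (w i - v i); have h2 := hcoef i; linarith
      linarith
    · have h := key v w fun i => by
        have h1 := neg_abs_le (w i - v i); have h2 := hcoef i; linarith
      linarith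
  have hRconv : ∀ x : X, ConvexOn ℝ univ (fun w => Rf w x) := by
    intro x
    refine ⟨convex_univ, fun u _ v _ a b ha hb hab => ?_⟩
    have h := (lse_convexOn N σ A hσ hApos).2
      (mem_univ fun i => u i - c i ↑x) (mem_univ fun i => v i - c i ↑x) ha hb hab
    have e : (a • fun i => u i - c i ↑x) + (b • fun i => v i - c i ↑x)
        = fun i => (a • u + b • v) i - c i ↑x := by
      funext i
      simp only [Pi.add_apply, Pi.smul_apply, smul_eq_mul]
      linear_combination (-(c i ↑x)) * hab
    rw [e] at h
    exact h
  have hSconv : Convex ℝ S := by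
    intro x hx y hy a b ha hb hab
    intro i
    show 0 < a * x i + b * y i
    rcases ha.eq_or_lt with h0 | h0
    · have hb1 : b = 1 := by linarith
      have := hy i
      rw [← h0, hb1]; simpa using this
    · have h1 : 0 < a * x i := mul_pos h0 (hx i)
      have h2 : 0 ≤ b * y i := mul_nonneg hb (hy i).le
      linarith
  have hπsum : StrictConvexOn ℝ S (fun w : Fin N → ℝ => ∑ i, π i (w i)) := by
    refine ⟨hSconv, fun u hu v hv huv a b ha hb hab => ?_⟩
    obtain ⟨i0, hi0⟩ : ∃ i, u i ≠ v i := by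
      by_contra hcon; push_neg at hcon; exact huv (funext hcon)
    show ∑ i, π i ((a • u + b • v) i) < a • ∑ i, π i (u i) + b • ∑ i, π i (v i)
    have hle : ∀ i ∈ Finset.univ, π i ((a • u + b • v) i) ≤ a * π i (u i) + b * π i (v i) := by
      intro i _
      have := (hπconv i).convexOn.2 (hu i) (hv i) ha.le hb.le hab
      simpa [smul_eq_mul] using this
    have hlt : π i0 ((a • u + b • v) i0) < a * π i0 (u i0) + b * π i0 (v i0) := by
      have := (hπconv i0).2 (hu i0) (hv i0) hi0 ha hb hab
      simpa [smul_eq_mul] using this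
    calc ∑ i, π i ((a • u + b • v) i) < ∑ i, (a * π i (u i) + b * π i (v i)) :=
        Finset.sum_lt_sum hle ⟨i0, Finset.mem_univ i0, hlt⟩
      _ = a • ∑ i, π i (u i) + b • ∑ i, π i (v i) := by
        rw [Finset.sum_add_distrib, ← Finset.mul_sum, ← Finset.mul_sum]
        simp [smul_eq_mul]
  have hIconv : ∀ (ν : Measure X) [IsFiniteMeasure ν],
      ConvexOn ℝ univ (fun w => ∫ x, Rf w x ∂ν) := by
    intro ν _
    refine ⟨convex_univ, fun u _ v _ a b ha hb hab => ?_⟩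
    have h1 : ∀ x : X, Rf (a • u + b • v) x ≤ a * Rf u x + b * Rf v x := fun x => by
      simpa [smul_eq_mul] using (hRconv x).2 (mem_univ u) (mem_univ v) ha hb hab
    calc ∫ x, Rf (a • u + b • v) x ∂ν ≤ ∫ x, (a * Rf u x + b * Rf v x) ∂ν :=
        integral_mono (hint ν _) (((hint ν u).const_mul a).add ((hint ν v).const_mul b)) h1
      _ = a • ∫ x, Rf u x ∂ν + b • ∫ x, Rf v x ∂ν := by
        rw [integral_add ((hint ν u).const_mul a) ((hint ν v).const_mul b)]
        simp only [integral_const_mul, smul_eq_mul]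
  have hJstrict : ∀ (ν : Measure X), IsProbabilityMeasure ν →
      StrictConvexOn ℝ S (Jfun X c w0 σ π ν) := by
    intro ν hν
    haveI := hν
    have he : Jfun X c w0 σ π ν
        = (fun w : Fin N → ℝ => ∑ i, π i (w i)) + (fun w => ∫ x, Rf w x ∂ν) := rfl
    rw [he]
    exact hπsum.add_convexOn ((hIconv ν).subset (subset_univ S) hSconv)
  obtain ⟨K, hK0, hK⟩ : ∃ K, 0 ≤ K ∧ ∀ i (x : X), |c i ↑x| ≤ K := by
    choose K0 hK0 using fun i => hXc.exists_bound_of_continuousOn (hc i).continuousOn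
    refine ⟨∑ i, max (K0 i) 0, Finset.sum_nonneg fun i _ => le_max_right _ _, fun i x => ?_⟩
    calc |c i ↑x| ≤ K0 i := by simpa [Real.norm_eq_abs] using hK0 i ↑x x.2
      _ ≤ max (K0 i) 0 := le_max_left _ _
      _ ≤ ∑ j, max (K0 j) 0 :=
        Finset.single_le_sum (f := fun j => max (K0 j) 0) (fun j _ => le_max_right _ _)
          (Finset.mem_univ i)
  have honeS : (fun _ : Fin N => (1 : ℝ)) ∈ S := fun i => one_pos
  set C0 : ℝ := (∑ i, π i 1) + σ * Real.log (A + ∑ _i : Fin N, Real.exp ((1 + K) / σ))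
    with hC0
  have hJone : ∀ (ν : Measure X), IsProbabilityMeasure ν →
      Jfun X c w0 σ π ν (fun _ => 1) ≤ C0 := by
    intro ν hν
    haveI := hν
    rw [hJ]
    have hpt : ∀ x : X, Rf (fun _ => 1) x
        ≤ σ * Real.log (A + ∑ _i : Fin N, Real.exp ((1 + K) / σ)) := by
      intro x
      apply mul_le_mul_of_nonneg_left _ hσ.le
      apply Real.log_le_log (by positivity)
      apply add_le_add_right
      refine Finset.sum_le_sum fun i _ => Real.exp_le_exp.2 ((div_le_div_iff_of_pos_right hσ).2 ?_)
      have := (abs_le.1 (hK i x)).1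
      simp only []
      linarith
    have h1 : ∫ x, Rf (fun _ => 1) x ∂ν
        ≤ ∫ _x : X, (σ * Real.log (A + ∑ _i : Fin N, Real.exp ((1 + K) / σ))) ∂ν :=
      integral_mono (hint ν _) (integrable_const _) hpt
    rw [integral_const] at h1
    simp only [Measure.real, measure_univ, ENNReal.toReal_one, one_smul] at h1
    rw [hC0]
    have : (∑ i, π i ((fun _ : Fin N => (1:ℝ)) i)) = ∑ i, π i 1 := rfl
    linarith [h1]
  set B : ℝ := C0 + K with hB
  have hub : ∀ (ν : Measure X), IsProbabilityMeasure ν → ∀ i, ws ν i ≤ B := by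
    intro ν hν i
    haveI := hν
    obtain ⟨hpos, hmin⟩ := hws ν hν
    have h1 : Jfun X c w0 σ π ν (ws ν) ≤ C0 :=
      le_trans (isMinOn_iff.1 hmin _ honeS) (hJone ν hν)
    have h2 : ws ν i - K ≤ Jfun X c w0 σ π ν (ws ν) := by
      rw [hJ]
      have hπ0 : 0 ≤ ∑ j, π j (ws ν j) :=
        Finset.sum_nonneg fun j _ => hπnonneg j _ (hpos j)
      have hpt : ∀ x : X, ws ν i - K ≤ Rf (ws ν) x := fun x => by
        have hgg := hRge2 (ws ν) x i
        have hcb := (abs_le.1 (hK i x)).2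
        linarith
      have h3 : ∫ _x : X, (ws ν i - K : ℝ) ∂ν ≤ ∫ x, Rf (ws ν) x ∂ν :=
        integral_mono (integrable_const _) (hint ν _) hpt
      rw [integral_const] at h3
      simp only [Measure.real, measure_univ, ENNReal.toReal_one, one_smul] at h3
      linarith
    linarith
  have hεex : ∀ i : Fin N, ∃ ε > (0:ℝ), ∀ v ∈ Ioo (0:ℝ) ε, C0 < π i v := by
    intro i
    have h := (hπblow i).eventually (eventually_gt_atTop C0)
    obtain ⟨u, hu, hsub⟩ := mem_nhdsGT_iff_exists_Ioo_subset.1 h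
    exact ⟨u, hu, fun v hv => hsub hv⟩
  choose ε hεpos hε using hεex
  have hlb : ∀ (ν : Measure X), IsProbabilityMeasure ν → ∀ i, ε i ≤ ws ν i := by
    intro ν hν i
    haveI := hν
    obtain ⟨hpos, hmin⟩ := hws ν hν
    have h1 : Jfun X c w0 σ π ν (ws ν) ≤ C0 :=
      le_trans (isMinOn_iff.1 hmin _ honeS) (hJone ν hν)
    have h2 : π i (ws ν i) ≤ Jfun X c w0 σ π ν (ws ν) := by
      rw [hJ]
      have hπs : π i (ws ν i) ≤ ∑ j, π j (ws ν j) :=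
        Finset.single_le_sum (f := fun j => π j (ws ν j))
          (fun j _ => hπnonneg j _ (hpos j)) (Finset.mem_univ i)
      have hI : 0 ≤ ∫ x, Rf (ws ν) x ∂ν :=
        integral_nonneg fun x => le_trans hw0.le (hRge (ws ν) x)
      linarith
    by_contra hcon
    push_neg at hcon
    exact absurd (le_trans h2 h1) (not_le.2 (hε i _ ⟨hpos i, hcon⟩))
  set Kset : Set (Fin N → ℝ) := Set.pi univ fun i => Icc (ε i) B with hKset
  have hKcpt : IsCompact Kset := isCompact_univ_pi fun i => isCompact_Icc
  have hKsub : Kset ⊆ S := fun x hx i => lt_of_lt_of_le (hεpos i) (hx i (mem_univ i)).1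
  have hmem : ∀ (ν : Measure X), IsProbabilityMeasure ν → ws ν ∈ Kset := by
    intro ν hν i _
    exact ⟨hlb ν hν i, hub ν hν i⟩
  have hweakR : ∀ w : Fin N → ℝ,
      Tendsto (fun n => ∫ x, Rf w x ∂(μn n)) atTop (nhds (∫ x, Rf w x ∂μ)) :=
    fun w => hweak ⟨Rf w, hRc w⟩
  apply tendsto_of_subseq_tendsto
  intro ns hns
  have hy : ∀ k, ws (μn (ns k)) ∈ Kset := fun k => hmem _ (hμn _)
  obtain ⟨a, haK, φ, hφ, hφt⟩ := hKcpt.tendsto_subseq hy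
  refine ⟨φ, ?_⟩
  have hg : Tendsto (fun k => ns (φ k)) atTop atTop := hns.comp hφ.tendsto_atTop
  have haS : a ∈ S := hKsub haK
  have hcoord : ∀ i, Tendsto (fun k => ws (μn (ns (φ k))) i) atTop (nhds (a i)) := fun i =>
    ((continuous_apply i).tendsto a).comp hφt
  have hlim1 : Tendsto (fun k => ∑ i, π i (ws (μn (ns (φ k))) i)) atTop
      (nhds (∑ i, π i (a i))) := by
    refine tendsto_finset_sum _ fun i _ => ?_
    exact ((hπderiv i (a i) (haS i)).continuousAt.tendsto).comp (hcoord i)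
  have hdiff : Tendsto (fun k => ∫ x, Rf (ws (μn (ns (φ k)))) x ∂(μn (ns (φ k)))
      - ∫ x, Rf a x ∂(μn (ns (φ k)))) atTop (nhds 0) := by
    have hbd : ∀ k, |∫ x, Rf (ws (μn (ns (φ k)))) x ∂(μn (ns (φ k)))
        - ∫ x, Rf a x ∂(μn (ns (φ k)))| ≤ ∑ i, |ws (μn (ns (φ k))) i - a i| := by
      intro k
      haveI := hμn (ns (φ k))
      rw [← integral_sub (hint _ _) (hint _ _)]
      have h := norm_integral_le_of_norm_le_const (μ := μn (ns (φ k)))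
        (f := fun x : X => Rf (ws (μn (ns (φ k)))) x - Rf a x)
        (C := ∑ i, |ws (μn (ns (φ k))) i - a i|)
        (Filter.Eventually.of_forall fun x => by
          rw [Real.norm_eq_abs]; exact hRlip _ _ x)
      simpa [measure_univ, Real.norm_eq_abs] using h
    have hsum0 : Tendsto (fun k => ∑ i, |ws (μn (ns (φ k))) i - a i|) atTop (nhds 0) := by
      have h := tendsto_finset_sum (Finset.univ : Finset (Fin N))
        (fun i _ => ((hcoord i).sub (tendsto_const_nhds (x := a i))).abs)
      simpa using h
    have hneg : Tendsto (fun k => -∑ i, |ws (μn (ns (φ k))) i - a i|) atTop (nhds 0) := by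
      simpa using hsum0.neg
    exact tendsto_of_tendsto_of_tendsto_of_le_of_le hneg hsum0
      (fun k => neg_le_of_abs_le (hbd k)) (fun k => le_of_abs_le (hbd k))
  have hlim2 : Tendsto (fun k => ∫ x, Rf (ws (μn (ns (φ k)))) x ∂(μn (ns (φ k)))) atTop
      (nhds (∫ x, Rf a x ∂μ)) := by
    have h2 : Tendsto (fun k => ∫ x, Rf a x ∂(μn (ns (φ k)))) atTop
        (nhds (∫ x, Rf a x ∂μ)) := (hweakR a).comp hg
    have h3 := hdiff.add h2
    simp only [sub_add_cancel, zero_add] at h3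
    exact h3
  have hlimJ : Tendsto (fun k => Jfun X c w0 σ π (μn (ns (φ k))) (ws (μn (ns (φ k))))) atTop
      (nhds (Jfun X c w0 σ π μ a)) := by
    simp only [hJ]
    exact hlim1.add hlim2
  have hminA : IsMinOn (Jfun X c w0 σ π μ) S a := by
    rw [isMinOn_iff]
    intro v hv
    have hval : ∀ k, Jfun X c w0 σ π (μn (ns (φ k))) (ws (μn (ns (φ k))))
        ≤ Jfun X c w0 σ π (μn (ns (φ k))) v :=
      fun k => isMinOn_iff.1 (hws _ (hμn _)).2 v hv
    have hlimv : Tendsto (fun k => Jfun X c w0 σ π (μn (ns (φ k))) v) atTop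
        (nhds (Jfun X c w0 σ π μ v)) := by
      simp only [hJ]
      exact tendsto_const_nhds.add ((hweakR v).comp hg)
    exact le_of_tendsto_of_tendsto' hlimJ hlimv hval
  have ha : a = ws μ :=
    (hJstrict μ hμ).eq_of_isMinOn hminA (hws μ hμ).2 haS (hws μ hμ).1
  rw [← ha]
  exact hφt
end

section
/- Fix σ > 0 and w₀ > 0, and suppose R_σ(x,w) ≥ w₀ for all x ∈ X and w ∈ ℝ_{≥0}^N. Define μ̃(x,w,α) = R_σ(x,w)^α / ∫_X R_σ(y,w)^α dy for α ≥ 0. Then for each j and each (x,w,α) with α ∈ [0,1], |∂μ̃/∂w_j (x,w,α)| ≤ (α/w₀) · R_σ(x,w)^α / ∫_X R_σ(y,w)^α dy, and consequently ∫_X |∇_w μ̃(x,w,α)| dx ≤ α√N / w₀. -/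
open MeasureTheory Filter Set

/-- The regularized revenue R_σ(x,w) = σ log(e^{w₀/σ} + Σᵢ e^{(wᵢ - cᵢ(x))/σ}). -/
noncomputable def Rsig {d N : ℕ} (c : Fin N → EuclideanSpace ℝ (Fin d) → ℝ)
    (w0 σ : ℝ) (w : Fin N → ℝ) (x : EuclideanSpace ℝ (Fin d)) : ℝ :=
  σ * Real.log (Real.exp (w0 / σ) + ∑ j, Real.exp ((w j - c j x) / σ))

/-- The normalized density μ̃(x,w,α) = R_σ(x,w)^α / ∫_X R_σ(y,w)^α dy. -/
noncomputable def densTilde {d N : ℕ} (X : Set (EuclideanSpace ℝ (Fin d)))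
    (c : Fin N → EuclideanSpace ℝ (Fin d) → ℝ) (w0 σ α : ℝ)
    (w : Fin N → ℝ) (x : EuclideanSpace ℝ (Fin d)) : ℝ :=
  Rsig c w0 σ w x ^ α / ∫ y in X, Rsig c w0 σ w y ^ α

set_option maxHeartbeats 1000000

section Aux
variable {d N : ℕ} (c : Fin N → EuclideanSpace ℝ (Fin d) → ℝ) (w0 σ : ℝ)

noncomputable def Ssum (w : Fin N → ℝ) (x : EuclideanSpace ℝ (Fin d)) : ℝ :=
  Real.exp (w0 / σ) + ∑ j, Real.exp ((w j - c j x) / σ)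

lemma Ssum_pos (w : Fin N → ℝ) (x : EuclideanSpace ℝ (Fin d)) : 0 < Ssum c w0 σ w x := by
  unfold Ssum
  positivity

lemma exp_le_Ssum (w : Fin N → ℝ) (x : EuclideanSpace ℝ (Fin d)) (j : Fin N) :
    Real.exp ((w j - c j x) / σ) ≤ Ssum c w0 σ w x := by
  unfold Ssum
  have h1 : Real.exp ((w j - c j x) / σ) ≤ ∑ i, Real.exp ((w i - c i x) / σ) :=
    Finset.single_le_sum (f := fun i => Real.exp ((w i - c i x) / σ))
      (fun i _ => (Real.exp_pos _).le) (Finset.mem_univ j)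
  linarith [Real.exp_pos (w0 / σ)]

lemma continuous_Ssum (hc : ∀ i, Continuous (c i)) (w : Fin N → ℝ) :
    Continuous (fun x => Ssum c w0 σ w x) :=
  continuous_const.add (continuous_finset_sum _ fun i _ =>
    Real.continuous_exp.comp ((continuous_const.sub (hc i)).div_const σ))

lemma Rsig_ge (hσ : 0 < σ) (w : Fin N → ℝ) (x : EuclideanSpace ℝ (Fin d)) :
    w0 ≤ Rsig c w0 σ w x := by
  unfold Rsig
  have h1 : Real.exp (w0 / σ) ≤ Real.exp (w0 / σ) + ∑ j, Real.exp ((w j - c j x) / σ) := by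
    have : (0:ℝ) ≤ ∑ j, Real.exp ((w j - c j x) / σ) :=
      Finset.sum_nonneg fun i _ => (Real.exp_pos _).le
    linarith
  have h2 : w0 / σ ≤ Real.log (Real.exp (w0 / σ) + ∑ j, Real.exp ((w j - c j x) / σ)) := by
    calc w0 / σ = Real.log (Real.exp (w0 / σ)) := (Real.log_exp _).symm
    _ ≤ _ := Real.log_le_log (Real.exp_pos _) h1
  calc w0 = σ * (w0 / σ) := by field_simp
  _ ≤ _ := mul_le_mul_of_nonneg_left h2 hσ.le

lemma continuous_Rsig (hc : ∀ i, Continuous (c i)) (w : Fin N → ℝ) :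
    Continuous (fun x => Rsig c w0 σ w x) :=
  continuous_const.mul ((continuous_Ssum c w0 σ hc w).log
    (fun x => (Ssum_pos c w0 σ w x).ne'))

lemma hasDerivAt_Rsig (hσ : 0 < σ) (w : Fin N → ℝ) (j : Fin N) (x : EuclideanSpace ℝ (Fin d)) :
    HasDerivAt (fun t => Rsig c w0 σ (Function.update w j t) x)
      (Real.exp ((w j - c j x) / σ) / Ssum c w0 σ w x) (w j) := by
  have hterm : ∀ i : Fin N, HasDerivAt
      (fun t => Real.exp ((Function.update w j t i - c i x) / σ))
      (if i = j then Real.exp ((w j - c j x) / σ) * (1 / σ) else 0) (w j) := by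
    intro i
    by_cases h : i = j
    · subst h
      simp only [Function.update_self, if_pos rfl]
      have h1 : HasDerivAt (fun t : ℝ => (t - c i x) / σ) (1 / σ) (w i) := by
        simpa using ((hasDerivAt_id (w i)).sub_const (c i x)).div_const σ
      simpa using h1.exp
    · simp only [Function.update_of_ne h, if_neg h]
      exact hasDerivAt_const _ _
  have hsum : HasDerivAt (fun t => ∑ i, Real.exp ((Function.update w j t i - c i x) / σ))
      (Real.exp ((w j - c j x) / σ) * (1 / σ)) (w j) := by
    have := HasDerivAt.fun_sum (fun i (_ : i ∈ Finset.univ) => hterm i)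
    simpa using this
  have hS : HasDerivAt (fun t => Real.exp (w0 / σ) +
      ∑ i, Real.exp ((Function.update w j t i - c i x) / σ))
      (Real.exp ((w j - c j x) / σ) * (1 / σ)) (w j) := by
    exact hsum.const_add _
  have hSval : (Real.exp (w0 / σ) + ∑ i, Real.exp ((Function.update w j (w j) i - c i x) / σ))
      = Ssum c w0 σ w x := by
    rw [Function.update_eq_self]; rfl
  have hlog := hS.log (by rw [hSval]; exact (Ssum_pos c w0 σ w x).ne')
  have := hlog.const_mul σ
  unfold Rsig
  refine this.congr_deriv ?_
  rw [hSval]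
  field_simp
noncomputable def Fp (α : ℝ) (w : Fin N → ℝ) (j : Fin N) (t : ℝ)
    (y : EuclideanSpace ℝ (Fin d)) : ℝ :=
  Real.exp ((t - c j y) / σ) / Ssum c w0 σ (Function.update w j t) y * α *
    Rsig c w0 σ (Function.update w j t) y ^ (α - 1)

lemma Fp_eq (α : ℝ) (w : Fin N → ℝ) (j : Fin N) (t : ℝ) (y : EuclideanSpace ℝ (Fin d)) :
    Fp c w0 σ α w j t y = α * Rsig c w0 σ (Function.update w j t) y ^ (α - 1) *
      (Real.exp ((t - c j y) / σ) / Ssum c w0 σ (Function.update w j t) y) := by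
  unfold Fp; ring

lemma hasDerivAt_rpow_update (hw0 : 0 < w0) (hσ : 0 < σ) (α : ℝ) (w : Fin N → ℝ) (j : Fin N)
    (t : ℝ) (y : EuclideanSpace ℝ (Fin d)) :
    HasDerivAt (fun s => Rsig c w0 σ (Function.update w j s) y ^ α)
      (Fp c w0 σ α w j t y) t := by
  have hRpos : 0 < Rsig c w0 σ (Function.update w j t) y :=
    lt_of_lt_of_le hw0 (Rsig_ge c w0 σ hσ _ y)
  have h1 := hasDerivAt_Rsig c w0 σ hσ (Function.update w j t) j y
  simp only [Function.update_idem, Function.update_self] at h1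
  have h2 := h1.rpow_const (p := α) (Or.inl hRpos.ne')
  unfold Fp
  exact h2

lemma Fp_nonneg (hw0 : 0 < w0) (hσ : 0 < σ) {α : ℝ} (hα0 : 0 ≤ α) (w : Fin N → ℝ) (j : Fin N)
    (t : ℝ) (y : EuclideanSpace ℝ (Fin d)) : 0 ≤ Fp c w0 σ α w j t y := by
  have hRpos : 0 < Rsig c w0 σ (Function.update w j t) y :=
    lt_of_lt_of_le hw0 (Rsig_ge c w0 σ hσ _ y)
  rw [Fp_eq]
  exact mul_nonneg (mul_nonneg hα0 (Real.rpow_nonneg hRpos.le _))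
    (div_nonneg (Real.exp_pos _).le (Ssum_pos c w0 σ _ y).le)

lemma Fp_le_mid (hw0 : 0 < w0) (hσ : 0 < σ) {α : ℝ} (hα0 : 0 ≤ α) (w : Fin N → ℝ) (j : Fin N)
    (t : ℝ) (y : EuclideanSpace ℝ (Fin d)) :
    Fp c w0 σ α w j t y ≤ α * Rsig c w0 σ (Function.update w j t) y ^ (α - 1) := by
  have hRpos : 0 < Rsig c w0 σ (Function.update w j t) y :=
    lt_of_lt_of_le hw0 (Rsig_ge c w0 σ hσ _ y)
  rw [Fp_eq]
  have hexp := exp_le_Ssum c w0 σ (Function.update w j t) y j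
  rw [Function.update_self] at hexp
  have hr1 : Real.exp ((t - c j y) / σ) / Ssum c w0 σ (Function.update w j t) y ≤ 1 :=
    (div_le_one (Ssum_pos c w0 σ (Function.update w j t) y)).2 hexp
  exact mul_le_of_le_one_right (mul_nonneg hα0 (Real.rpow_nonneg hRpos.le _)) hr1

lemma Fp_le (hw0 : 0 < w0) (hσ : 0 < σ) {α : ℝ} (hα0 : 0 ≤ α) (w : Fin N → ℝ) (j : Fin N)
    (t : ℝ) (y : EuclideanSpace ℝ (Fin d)) :
    Fp c w0 σ α w j t y ≤ α / w0 * Rsig c w0 σ (Function.update w j t) y ^ α := by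
  have hRpos : 0 < Rsig c w0 σ (Function.update w j t) y :=
    lt_of_lt_of_le hw0 (Rsig_ge c w0 σ hσ _ y)
  refine (Fp_le_mid c w0 σ hw0 hσ hα0 w j t y).trans ?_
  rw [Real.rpow_sub_one hRpos.ne']
  have h2 : Rsig c w0 σ (Function.update w j t) y ^ α / Rsig c w0 σ (Function.update w j t) y ≤
      Rsig c w0 σ (Function.update w j t) y ^ α / w0 :=
    div_le_div_of_nonneg_left (Real.rpow_nonneg hRpos.le _) hw0 (Rsig_ge c w0 σ hσ _ y)
  calc α * (Rsig c w0 σ (Function.update w j t) y ^ α / Rsig c w0 σ (Function.update w j t) y)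
      ≤ α * (Rsig c w0 σ (Function.update w j t) y ^ α / w0) :=
        mul_le_mul_of_nonneg_left h2 hα0
  _ = α / w0 * Rsig c w0 σ (Function.update w j t) y ^ α := by ring

lemma Fp_bound (hw0 : 0 < w0) (hσ : 0 < σ) {α : ℝ} (hα0 : 0 ≤ α) (hα1 : α ≤ 1)
    (w : Fin N → ℝ) (j : Fin N) (t : ℝ) (y : EuclideanSpace ℝ (Fin d)) :
    ‖Fp c w0 σ α w j t y‖ ≤ α * w0 ^ (α - 1) := by
  rw [Real.norm_eq_abs, abs_of_nonneg (Fp_nonneg c w0 σ hw0 hσ hα0 w j t y)]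
  refine (Fp_le_mid c w0 σ hw0 hσ hα0 w j t y).trans ?_
  exact mul_le_mul_of_nonneg_left
    (Real.rpow_le_rpow_of_nonpos hw0 (Rsig_ge c w0 σ hσ _ y) (by linarith)) hα0

lemma Fp_cont (hc : ∀ i, Continuous (c i)) (hw0 : 0 < w0) (hσ : 0 < σ) (α : ℝ)
    (w : Fin N → ℝ) (j : Fin N) (t : ℝ) : Continuous (Fp c w0 σ α w j t) := by
  have hRpos : ∀ y, 0 < Rsig c w0 σ (Function.update w j t) y :=
    fun y => lt_of_lt_of_le hw0 (Rsig_ge c w0 σ hσ _ y)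
  unfold Fp
  refine (((Real.continuous_exp.comp ((continuous_const.sub (hc j)).div_const σ)).div
    (continuous_Ssum c w0 σ hc _) (fun y => (Ssum_pos c w0 σ _ y).ne')).mul
    continuous_const).mul ?_
  exact (continuous_Rsig c w0 σ hc _).rpow_const (fun y => Or.inl (hRpos y).ne')
end Aux

/-- if R_σ ≥ w₀ on X, then for α ∈ [0,1] the partial derivatives of the
density μ̃(x,w,α) = R_σ(x,w)^α / ∫_X R_σ^α in the wage variables satisfy the pointwise bound
|∂μ̃/∂wⱼ| ≤ (α/w₀)·R_σ(x,w)^α/∫_X R_σ^α, and hence ∫_X |∇_w μ̃| dx ≤ α√N / w₀. -/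
theorem densTilde_gradient_bound (d N : ℕ) (X : Set (EuclideanSpace ℝ (Fin d)))
    (hXc : IsCompact X) (hXpos : 0 < volume X)
    (c : Fin N → EuclideanSpace ℝ (Fin d) → ℝ) (hc : ∀ i, Continuous (c i))
    (w0 σ α : ℝ) (hw0 : 0 < w0) (hσ : 0 < σ) (hα : α ∈ Icc (0 : ℝ) 1)
    (hRlb : ∀ x ∈ X, ∀ w : Fin N → ℝ, (∀ i, 0 ≤ w i) → w0 ≤ Rsig c w0 σ w x) :
    ∀ w : Fin N → ℝ, (∀ i, 0 ≤ w i) →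
      (∀ x ∈ X, ∀ j : Fin N,
        |deriv (fun t => densTilde X c w0 σ α (Function.update w j t) x) (w j)| ≤
          α / w0 * (Rsig c w0 σ w x ^ α / ∫ y in X, Rsig c w0 σ w y ^ α)) ∧
      (∫ x in X, Real.sqrt (∑ j : Fin N,
          (deriv (fun t => densTilde X c w0 σ α (Function.update w j t) x) (w j)) ^ 2)) ≤
        α * Real.sqrt N / w0 := by
  intro w hw
  obtain ⟨hα0, hα1⟩ := hα
  have hXm : MeasurableSet X := hXc.isClosed.measurableSet
  have hRpos : ∀ (v : Fin N → ℝ) y, 0 < Rsig c w0 σ v y :=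
    fun v y => lt_of_lt_of_le hw0 (Rsig_ge c w0 σ hσ v y)
  have hcontRpow : ∀ v : Fin N → ℝ, Continuous (fun y => Rsig c w0 σ v y ^ α) := fun v =>
    (continuous_Rsig c w0 σ hc v).rpow_const (fun y => Or.inl (hRpos v y).ne')
  have hint : ∀ v : Fin N → ℝ, IntegrableOn (fun y => Rsig c w0 σ v y ^ α) X volume :=
    fun v => (hcontRpow v).continuousOn.integrableOn_compact hXc
  set I : ℝ := ∫ y in X, Rsig c w0 σ w y ^ α with hI
  have hIpos : 0 < I := by
    have hto : 0 < (volume X).toReal := ENNReal.toReal_pos hXpos.ne' hXc.measure_lt_top.ne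
    have h1 : 0 < w0 ^ α * (volume X).toReal := by positivity
    calc (0:ℝ) < w0 ^ α * (volume X).toReal := h1
    _ = ∫ _y in X, w0 ^ α := by rw [setIntegral_const]; simp [mul_comm, Measure.real]
    _ ≤ I := setIntegral_mono_on (integrableOn_const hXc.measure_lt_top.ne) (hint w)
        hXm (fun y _ => Real.rpow_le_rpow hw0.le (Rsig_ge c w0 σ hσ w y) hα0)
  -- pointwise derivative bound for every x and j
  have hbound : ∀ (x : EuclideanSpace ℝ (Fin d)) (j : Fin N),
      |deriv (fun t => densTilde X c w0 σ α (Function.update w j t) x) (w j)| ≤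
        α / w0 * (Rsig c w0 σ w x ^ α / I) := by
    intro x j
    have hDD := hasDerivAt_integral_of_dominated_loc_of_deriv_le (μ := volume.restrict X)
      (x₀ := w j) (F := fun t y => Rsig c w0 σ (Function.update w j t) y ^ α)
      (F' := Fp c w0 σ α w j) (bound := fun _ => α * w0 ^ (α - 1)) (Metric.ball_mem_nhds _ one_pos)
      (Eventually.of_forall fun t => (hcontRpow _).aestronglyMeasurable)
      (by simpa [Function.update_eq_self, IntegrableOn] using hint w)
      (Fp_cont c w0 σ hc hw0 hσ α w j (w j)).aestronglyMeasurable
      (Eventually.of_forall fun y t _ => Fp_bound c w0 σ hw0 hσ hα0 hα1 w j t y)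
      (integrableOn_const hXc.measure_lt_top.ne)
      (Eventually.of_forall fun y t _ => hasDerivAt_rpow_update c w0 σ hw0 hσ α w j t y)
    obtain ⟨hF'int, hIder⟩ := hDD
    set I' : ℝ := ∫ y in X, Fp c w0 σ α w j (w j) y with hI'
    have hI'0 : 0 ≤ I' := integral_nonneg fun y => Fp_nonneg c w0 σ hw0 hσ hα0 w j _ y
    have hI'le : I' ≤ α / w0 * I := by
      calc I' ≤ ∫ y in X, α / w0 * Rsig c w0 σ w y ^ α := by
            refine setIntegral_mono_on hF'int ((hint w).const_mul _) hXm (fun y _ => ?_)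
            have := Fp_le c w0 σ hw0 hσ hα0 w j (w j) y
            rwa [Function.update_eq_self] at this
      _ = α / w0 * I := integral_const_mul _ _
    have hIne : (∫ y in X, Rsig c w0 σ (Function.update w j (w j)) y ^ α) ≠ 0 := by
      rw [Function.update_eq_self]; exact hIpos.ne'
    have hnum : HasDerivAt (fun t => Rsig c w0 σ (Function.update w j t) x ^ α)
        (Fp c w0 σ α w j (w j) x) (w j) := hasDerivAt_rpow_update c w0 σ hw0 hσ α w j (w j) x
    have hdiv := hnum.div hIder hIne
    have hderiv : deriv (fun t => densTilde X c w0 σ α (Function.update w j t) x) (w j) =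
        (Fp c w0 σ α w j (w j) x * (∫ y in X, Rsig c w0 σ (Function.update w j (w j)) y ^ α) -
          Rsig c w0 σ (Function.update w j (w j)) x ^ α * I') /
          (∫ y in X, Rsig c w0 σ (Function.update w j (w j)) y ^ α) ^ 2 :=
      HasDerivAt.deriv hdiv
    rw [hderiv, Function.update_eq_self, ← hI]
    have hf'0 : 0 ≤ Fp c w0 σ α w j (w j) x := Fp_nonneg c w0 σ hw0 hσ hα0 w j _ x
    have hf'le : Fp c w0 σ α w j (w j) x ≤ α / w0 * Rsig c w0 σ w x ^ α := by
      have := Fp_le c w0 σ hw0 hσ hα0 w j (w j) x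
      rwa [Function.update_eq_self] at this
    set f : ℝ := Rsig c w0 σ w x ^ α with hf
    set f' : ℝ := Fp c w0 σ α w j (w j) x with hf'
    have hf0 : 0 ≤ f := Real.rpow_nonneg (hRpos w x).le _
    have h2 : (0:ℝ) < I ^ 2 := pow_pos hIpos 2
    rw [abs_div, abs_of_pos h2, div_le_iff₀ h2]
    have hrhs : α / w0 * (f / I) * I ^ 2 = α / w0 * f * I := by
      field_simp
    rw [hrhs, abs_le]
    constructor
    · nlinarith [mul_nonneg hf'0 hIpos.le, mul_le_mul_of_nonneg_left hI'le hf0]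
    · nlinarith [mul_nonneg hf0 hI'0, mul_le_mul_of_nonneg_right hf'le hIpos.le]
  refine ⟨fun x _ j => hbound x j, ?_⟩
  -- part 2
  have hM0 : ∀ x, 0 ≤ α / w0 * (Rsig c w0 σ w x ^ α / I) := fun x =>
    mul_nonneg (div_nonneg hα0 hw0.le)
      (div_nonneg (Real.rpow_nonneg (hRpos w x).le _) hIpos.le)
  have hpt : ∀ x : EuclideanSpace ℝ (Fin d),
      Real.sqrt (∑ j : Fin N,
        (deriv (fun t => densTilde X c w0 σ α (Function.update w j t) x) (w j)) ^ 2) ≤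
      Real.sqrt N * (α / w0 * (Rsig c w0 σ w x ^ α / I)) := by
    intro x
    calc Real.sqrt (∑ j : Fin N,
          (deriv (fun t => densTilde X c w0 σ α (Function.update w j t) x) (w j)) ^ 2)
        ≤ Real.sqrt (∑ _j : Fin N, (α / w0 * (Rsig c w0 σ w x ^ α / I)) ^ 2) := by
          refine Real.sqrt_le_sqrt (Finset.sum_le_sum fun j _ => ?_)
          exact sq_le_sq' (neg_le_of_abs_le (hbound x j)) (le_of_abs_le (hbound x j))
    _ = Real.sqrt ((N : ℝ) * (α / w0 * (Rsig c w0 σ w x ^ α / I)) ^ 2) := by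
          rw [Finset.sum_const, Finset.card_univ, Fintype.card_fin, nsmul_eq_mul]
    _ = Real.sqrt N * (α / w0 * (Rsig c w0 σ w x ^ α / I)) := by
          rw [Real.sqrt_mul (Nat.cast_nonneg N), Real.sqrt_sq (hM0 x)]
  have hgint : IntegrableOn
      (fun x => Real.sqrt N * (α / w0 * (Rsig c w0 σ w x ^ α / I))) X volume :=
    (((hint w).div_const I).const_mul (α / w0)).const_mul (Real.sqrt N)
  calc (∫ x in X, Real.sqrt (∑ j : Fin N,
          (deriv (fun t => densTilde X c w0 σ α (Function.update w j t) x) (w j)) ^ 2))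
      ≤ ∫ x in X, Real.sqrt N * (α / w0 * (Rsig c w0 σ w x ^ α / I)) :=
        integral_mono_of_nonneg (Eventually.of_forall fun x => Real.sqrt_nonneg _)
          hgint (Eventually.of_forall fun x => hpt x)
  _ = α * Real.sqrt N / w0 := by
        rw [integral_const_mul, integral_const_mul, integral_div, ← hI,
          div_self hIpos.ne', mul_one]
        ring
end

section
/- Let G : (0,∞)^N × [0,α₀] → ℝ^N be C^1 and K = [w̲,w̄]^N ⊂ (0,∞)^N compact such that (i) all zeros of G(·,α) lie in K for every α ∈ [0,α₀], (ii) the Jacobian D_w G(w,α) is invertible at every zero (w,α) of G, and (iii) G(·,0) has exactly one zero. Then for every α ∈ [0,α₀], G(·,α) has exactly one zero. -/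
open Set

open Set Metric Filter

private lemma posOpen {N : ℕ} : IsOpen {w : Fin N → ℝ | ∀ i, 0 < w i} := by
  have : {w : Fin N → ℝ | ∀ i, 0 < w i} = ⋂ i, {w | 0 < w i} := by ext w; simp
  rw [this]
  exact isOpen_iInter_of_finite fun i => isOpen_lt continuous_const (continuous_apply i)

/-- Partial derivative in `w`, as composition with `inl`, is a genuine `HasFDerivAt`. -/
private lemma slice_deriv {N : ℕ} {α₀ : ℝ}
    {G : (Fin N → ℝ) → ℝ → (Fin N → ℝ)}
    (hG : ContDiffOn ℝ 1 (fun p : (Fin N → ℝ) × ℝ => G p.1 p.2)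
        ({w : Fin N → ℝ | ∀ i, 0 < w i} ×ˢ Icc 0 α₀))
    {p : (Fin N → ℝ) × ℝ}
    (hp : p ∈ ({w : Fin N → ℝ | ∀ i, 0 < w i} ×ˢ Icc 0 α₀)) :
    HasFDerivAt (fun v => G v p.2)
      ((fderivWithin ℝ (fun p : (Fin N → ℝ) × ℝ => G p.1 p.2)
          ({w : Fin N → ℝ | ∀ i, 0 < w i} ×ˢ Icc 0 α₀) p).comp
        (ContinuousLinearMap.inl ℝ (Fin N → ℝ) ℝ)) p.1 := by
  set U : Set (Fin N → ℝ) := {w | ∀ i, 0 < w i}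
  set s := U ×ˢ Icc (0:ℝ) α₀
  have hdiff := ((hG.differentiableOn one_ne_zero) p hp).hasFDerivWithinAt
  have hι : HasFDerivWithinAt (fun w : Fin N → ℝ => (w, p.2))
      (ContinuousLinearMap.inl ℝ (Fin N → ℝ) ℝ) U p.1 :=
    (hasFDerivAt_prodMk_left p.1 p.2).hasFDerivWithinAt
  have hmaps : MapsTo (fun w : Fin N → ℝ => (w, p.2)) U s := fun w hw => ⟨hw, hp.2⟩
  have hcomp := HasFDerivWithinAt.comp p.1 hdiff hι hmaps
  exact hcomp.hasFDerivAt (posOpen.mem_nhds hp.1)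

/-- Key local lemma: near a nondegenerate zero, for nearby parameters there is a unique
zero in a small closed ball, which moreover consists of positive vectors. -/
private lemma key {N : ℕ} {α₀ : ℝ} (hα₀ : 0 < α₀)
    {G : (Fin N → ℝ) → ℝ → (Fin N → ℝ)}
    (hG : ContDiffOn ℝ 1 (fun p : (Fin N → ℝ) × ℝ => G p.1 p.2)
        ({w : Fin N → ℝ | ∀ i, 0 < w i} ×ˢ Icc 0 α₀))
    {α : ℝ} (hα : α ∈ Icc (0:ℝ) α₀) {w : Fin N → ℝ} (hw : ∀ i, 0 < w i)
    (hz : G w α = 0)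
    (hbij : Function.Bijective ⇑(fderiv ℝ (fun v => G v α) w))
    (ρ : ℝ) (hρ : 0 < ρ) :
    ∃ ε > 0, ε ≤ ρ ∧ (∀ v ∈ closedBall w ε, ∀ i, 0 < v i) ∧
      ∃ δ > 0, ∀ β ∈ Icc (0:ℝ) α₀, |β - α| < δ →
        ∃ v, v ∈ closedBall w ε ∧ G v β = 0 ∧
          ∀ v', v' ∈ closedBall w ε → G v' β = 0 → v' = v := by
  classical
  set U : Set (Fin N → ℝ) := {w | ∀ i, 0 < w i} with hU
  set s := U ×ˢ Icc (0:ℝ) α₀ with hs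
  set F : (Fin N → ℝ) × ℝ → (Fin N → ℝ) := fun p => G p.1 p.2 with hF
  set D : (Fin N → ℝ) × ℝ → ((Fin N → ℝ) →L[ℝ] (Fin N → ℝ)) :=
    fun p => (fderivWithin ℝ F s p).comp (ContinuousLinearMap.inl ℝ (Fin N → ℝ) ℝ) with hD
  have hwU : w ∈ U := hw
  have hmem : (w, α) ∈ s := ⟨hwU, hα⟩
  have hsd : UniqueDiffOn ℝ s := posOpen.uniqueDiffOn.prod (uniqueDiffOn_Icc hα₀)
  have hDcont : ContinuousOn D s :=
    (hG.continuousOn_fderivWithin hsd le_rfl).clm_comp continuousOn_const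
  have hslice : ∀ p ∈ s, HasFDerivAt (fun v => G v p.2) (D p) p.1 := fun p hp =>
    slice_deriv hG hp
  set A : (Fin N → ℝ) →L[ℝ] (Fin N → ℝ) := D (w, α) with hA
  have hAeq : fderiv ℝ (fun v => G v α) w = A := (hslice (w, α) hmem).fderiv
  rw [hAeq] at hbij
  set B : (Fin N → ℝ) ≃L[ℝ] (Fin N → ℝ) :=
    (LinearEquiv.ofBijective (↑A : (Fin N → ℝ) →ₗ[ℝ] (Fin N → ℝ)) hbij).toContinuousLinearEquiv
    with hB
  have hBA : ∀ x, B x = A x := fun x => rfl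
  set c : ℝ := ‖(B.symm : (Fin N → ℝ) →L[ℝ] (Fin N → ℝ))‖ + 1 with hc
  have hcpos : 0 < c := by positivity
  have hBnorm : ∀ x, ‖B.symm x‖ ≤ c * ‖x‖ := by
    intro x
    calc ‖B.symm x‖ ≤ ‖(B.symm : (Fin N → ℝ) →L[ℝ] (Fin N → ℝ))‖ * ‖x‖ :=
          (B.symm : (Fin N → ℝ) →L[ℝ] (Fin N → ℝ)).le_opNorm x
      _ ≤ c * ‖x‖ := by
          have := norm_nonneg x
          nlinarith [norm_nonneg (B.symm : (Fin N → ℝ) →L[ℝ] (Fin N → ℝ))]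
  -- ball inside U
  obtain ⟨ε₀, hε₀, hball⟩ : ∃ ε₀ > 0, closedBall w ε₀ ⊆ U := by
    obtain ⟨r, hr, h⟩ := Metric.isOpen_iff.1 (posOpen (N := N)) w hwU
    exact ⟨r/2, by linarith, fun v hv =>
      h (mem_ball.2 (lt_of_le_of_lt (mem_closedBall.1 hv) (by linarith)))⟩
  -- continuity of D near (w, α)
  obtain ⟨r₁, hr₁, hDr⟩ : ∃ r₁ > 0, ∀ p ∈ s, dist p (w, α) < r₁ →
      ‖D p - A‖ < 1 / (2 * c) := by
    have := (Metric.continuousWithinAt_iff).1 ((hDcont (w, α) hmem)) (1 / (2 * c))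
      (by positivity)
    obtain ⟨δ, hδ, h⟩ := this
    exact ⟨δ, hδ, fun p hp hd => by
      have := h hp hd; rwa [dist_eq_norm] at this⟩
  set ε : ℝ := min (min ε₀ (r₁ / 2)) ρ with hε
  have hεpos : 0 < ε := by
    apply lt_min (lt_min hε₀ (by linarith)) hρ
  have hερ : ε ≤ ρ := min_le_right _ _
  have hεε₀ : ε ≤ ε₀ := le_trans (min_le_left _ _) (min_le_left _ _)
  have hεr₁ : ε ≤ r₁ / 2 := le_trans (min_le_left _ _) (min_le_right _ _)
  have hballU : closedBall w ε ⊆ U := fun v hv => hball (closedBall_subset_closedBall hεε₀ hv)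
  -- continuity of β ↦ G w β near α
  obtain ⟨r₂, hr₂, hGr⟩ : ∃ r₂ > 0, ∀ β ∈ Icc (0:ℝ) α₀, |β - α| < r₂ →
      ‖G w β‖ ≤ ε / (2 * c) := by
    have := (Metric.continuousWithinAt_iff).1 ((hG.continuousOn (w, α) hmem)) (ε / (2 * c))
      (by positivity)
    obtain ⟨δ, hδ, h⟩ := this
    refine ⟨δ, hδ, fun β hβ hd => ?_⟩
    have hps : ((w, β) : (Fin N → ℝ) × ℝ) ∈ s := ⟨hwU, hβ⟩
    have hdist : dist ((w, β) : (Fin N → ℝ) × ℝ) (w, α) < δ := by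
      rw [Prod.dist_eq]
      simp only [dist_self, Real.dist_eq]
      rw [max_eq_right (abs_nonneg _)]
      exact hd
    have := h hps hdist
    rw [dist_eq_norm] at this
    have hFz : F (w, α) = 0 := hz
    rw [hFz, sub_zero] at this
    exact le_of_lt this
  set δ : ℝ := min (r₁ / 2) r₂ with hδdef
  refine ⟨ε, hεpos, hερ, fun v hv => hballU hv, δ, lt_min (by linarith) hr₂, ?_⟩
  intro β hβ hβδ
  -- derivative bound on the ball
  have hDb : ∀ v ∈ closedBall w ε, HasFDerivAt (fun u => G u β) (D (v, β)) v ∧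
      ‖D (v, β) - A‖ ≤ 1 / (2 * c) := by
    intro v hv
    have hvU : v ∈ U := hballU hv
    have hps : ((v, β) : (Fin N → ℝ) × ℝ) ∈ s := ⟨hvU, hβ⟩
    have hd : dist ((v, β) : (Fin N → ℝ) × ℝ) (w, α) < r₁ := by
      rw [Prod.dist_eq]
      apply max_lt
      · exact lt_of_le_of_lt hv (by linarith)
      · rw [Real.dist_eq]
        exact lt_of_lt_of_le hβδ (le_trans (min_le_left _ _) (by linarith))
    exact ⟨hslice (v, β) hps, le_of_lt (hDr (v, β) hps hd)⟩
  -- mean value: contraction estimate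
  set Φ : (Fin N → ℝ) → (Fin N → ℝ) := fun v => v - B.symm (G v β) with hΦ
  have hmv : ∀ v ∈ closedBall w ε, ∀ v' ∈ closedBall w ε,
      ‖Φ v - Φ v'‖ ≤ (1/2) * ‖v - v'‖ := by
    intro v hv v' hv'
    set g : (Fin N → ℝ) → (Fin N → ℝ) := fun u => G u β - A u with hg
    have hgd : ∀ u ∈ closedBall w ε, HasFDerivWithinAt g (D (u, β) - A) (closedBall w ε) u :=
      fun u hu => ((hDb u hu).1.sub A.hasFDerivAt).hasFDerivWithinAt
    have hgb : ∀ u ∈ closedBall w ε, ‖D (u, β) - A‖ ≤ 1 / (2 * c) :=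
      fun u hu => (hDb u hu).2
    have hmv0 := Convex.norm_image_sub_le_of_norm_hasFDerivWithin_le hgd hgb
      (convex_closedBall w ε) hv' hv
    have hrw : Φ v - Φ v' = -(B.symm (g v - g v')) := by
      simp only [hΦ, hg]
      rw [map_sub, map_sub, map_sub]
      have h1 : B.symm (A v) = v := by rw [← hBA]; exact B.symm_apply_apply v
      have h2 : B.symm (A v') = v' := by rw [← hBA]; exact B.symm_apply_apply v'
      rw [h1, h2]
      abel
    rw [hrw, norm_neg]
    calc ‖B.symm (g v - g v')‖ ≤ c * ‖g v - g v'‖ := hBnorm _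
      _ ≤ c * (1 / (2 * c) * ‖v - v'‖) := by
          apply mul_le_mul_of_nonneg_left _ (le_of_lt hcpos)
          exact hmv0
      _ = (1/2) * ‖v - v'‖ := by field_simp
  have hmaps : MapsTo Φ (closedBall w ε) (closedBall w ε) := by
    intro v hv
    have h1 : ‖Φ v - Φ w‖ ≤ (1/2) * ‖v - w‖ := hmv v hv w (mem_closedBall_self (le_of_lt hεpos))
    have h2 : Φ w - w = -(B.symm (G w β)) := by simp [hΦ]
    have h3 : ‖Φ w - w‖ ≤ ε / 2 := by
      rw [h2, norm_neg]
      calc ‖B.symm (G w β)‖ ≤ c * ‖G w β‖ := hBnorm _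
        _ ≤ c * (ε / (2 * c)) := mul_le_mul_of_nonneg_left
            (hGr β hβ (lt_of_lt_of_le hβδ (min_le_right _ _))) (le_of_lt hcpos)
        _ = ε / 2 := by field_simp
    have : ‖Φ v - w‖ ≤ ε := by
      calc ‖Φ v - w‖ = ‖(Φ v - Φ w) + (Φ w - w)‖ := by ring_nf
        _ ≤ ‖Φ v - Φ w‖ + ‖Φ w - w‖ := norm_add_le _ _
        _ ≤ (1/2) * ‖v - w‖ + ε / 2 := add_le_add h1 h3
        _ ≤ (1/2) * ε + ε / 2 := by
            have : ‖v - w‖ ≤ ε := mem_closedBall_iff_norm.1 hv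
            linarith
        _ = ε := by ring
    exact mem_closedBall_iff_norm.2 this
  -- fixed point
  haveI : Nonempty (closedBall w ε) := ⟨⟨w, mem_closedBall_self (le_of_lt hεpos)⟩⟩
  haveI : CompleteSpace (closedBall w ε) :=
    (Metric.isClosed_closedBall (x := w) (ε := ε)).completeSpace_coe
  set Ψ : closedBall w ε → closedBall w ε := hmaps.restrict Φ _ _ with hΨ
  have hcontr : ContractingWith (1/2 : NNReal) Ψ := by
    constructor
    · rw [← NNReal.coe_lt_coe]; norm_num
    · apply LipschitzWith.of_dist_le_mul
      intro x y
      rw [Subtype.dist_eq, dist_eq_norm, Subtype.dist_eq, dist_eq_norm]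
      have := hmv x.1 x.2 y.1 y.2
      calc ‖(Ψ x : Fin N → ℝ) - (Ψ y : Fin N → ℝ)‖ = ‖Φ x.1 - Φ y.1‖ := rfl
        _ ≤ (1/2) * ‖x.1 - y.1‖ := this
        _ = ((1/2 : NNReal) : ℝ) * ‖x.1 - y.1‖ := by norm_num
  set x := hcontr.fixedPoint Ψ with hx
  have hfix : Φ x.1 = x.1 := congrArg Subtype.val (hcontr.fixedPoint_isFixedPt)
  have hzero : G x.1 β = 0 := by
    have : B.symm (G x.1 β) = 0 := by
      have := hfix
      simp only [hΦ] at this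
      have h' : x.1 - B.symm (G x.1 β) = x.1 := this
      have := sub_eq_self.1 h'
      exact this
    have := congrArg B this
    rwa [B.apply_symm_apply, map_zero] at this
  refine ⟨x.1, x.2, hzero, ?_⟩
  intro v' hv' hz'
  -- v' is a fixed point of Φ in the ball
  have hfix' : Φ v' = v' := by simp [hΦ, hz']
  have hd := hmv v' hv' x.1 x.2
  rw [hfix', hfix] at hd
  have : ‖v' - x.1‖ ≤ 0 := by linarith
  have := le_antisymm this (norm_nonneg _)
  exact sub_eq_zero.1 (by rwa [← norm_eq_zero])

open Filter in
/-- limit of zeros is a zero -/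
private lemma limit_zero {N : ℕ} {α₀ : ℝ}
    {G : (Fin N → ℝ) → ℝ → (Fin N → ℝ)}
    (hG : ContDiffOn ℝ 1 (fun p : (Fin N → ℝ) × ℝ => G p.1 p.2)
        ({w : Fin N → ℝ | ∀ i, 0 < w i} ×ˢ Icc 0 α₀))
    {vs : ℕ → (Fin N → ℝ)} {βs : ℕ → ℝ} {v : Fin N → ℝ} {β : ℝ}
    (hpos : ∀ n, ∀ i, 0 < vs n i) (hβT : ∀ n, βs n ∈ Icc (0:ℝ) α₀)
    (hzero : ∀ n, G (vs n) (βs n) = 0)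
    (hv : Tendsto vs atTop (nhds v)) (hβ : Tendsto βs atTop (nhds β))
    (hvpos : ∀ i, 0 < v i) (hβmem : β ∈ Icc (0:ℝ) α₀) :
    G v β = 0 := by
  have hmem : ((v, β) : (Fin N → ℝ) × ℝ) ∈ ({w : Fin N → ℝ | ∀ i, 0 < w i} ×ˢ Icc 0 α₀) :=
    ⟨hvpos, hβmem⟩
  have hc := (hG.continuousOn (v, β) hmem)
  have htend : Tendsto (fun n => ((vs n, βs n) : (Fin N → ℝ) × ℝ)) atTop
      (nhdsWithin (v, β) ({w : Fin N → ℝ | ∀ i, 0 < w i} ×ˢ Icc 0 α₀)) := by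
    rw [tendsto_nhdsWithin_iff]
    exact ⟨hv.prodMk_nhds hβ, Filter.Eventually.of_forall fun n => ⟨hpos n, hβT n⟩⟩
  have := hc.tendsto.comp htend
  have hconst : Tendsto (fun n => G (vs n) (βs n)) atTop (nhds (0 : Fin N → ℝ)) := by
    simp only [hzero]; exact tendsto_const_nhds (α := ℕ) (x := (0 : Fin N → ℝ))
  exact (tendsto_nhds_unique hconst this).symm


/-- abstract continuation/uniqueness argument: let G be C¹ on
(0,∞)^N × [0,α₀], suppose all zeros of G(·,α) lie in a fixed compact box
K = [w̲,w̄]^N ⊂ (0,∞)^N, that the Jacobian D_w G is invertible at every zero, and that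
G(·,0) has exactly one zero. Then G(·,α) has exactly one zero for every α ∈ [0,α₀]. -/
theorem continuation_uniqueness (N : ℕ) (α₀ : ℝ) (hα₀ : 0 ≤ α₀)
    (G : (Fin N → ℝ) → ℝ → (Fin N → ℝ))
    (hG : ContDiffOn ℝ 1 (fun p : (Fin N → ℝ) × ℝ => G p.1 p.2)
        ({w : Fin N → ℝ | ∀ i, 0 < w i} ×ˢ Icc 0 α₀))
    (wlo whi : ℝ) (hlo : 0 < wlo) (hlohi : wlo ≤ whi)
    (hzeros : ∀ α ∈ Icc (0 : ℝ) α₀, ∀ w : Fin N → ℝ, (∀ i, 0 < w i) → G w α = 0 →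
        ∀ i, w i ∈ Icc wlo whi)
    (hjac : ∀ α ∈ Icc (0 : ℝ) α₀, ∀ w : Fin N → ℝ, (∀ i, 0 < w i) → G w α = 0 →
        Function.Bijective ⇑(fderiv ℝ (fun v => G v α) w))
    (huniq0 : ∃! w : Fin N → ℝ, (∀ i, 0 < w i) ∧ G w 0 = 0) :
    ∀ α ∈ Icc (0 : ℝ) α₀, ∃! w : Fin N → ℝ, (∀ i, 0 < w i) ∧ G w α = 0 := by
  classical
  rcases eq_or_lt_of_le hα₀ with h0 | hα₀pos
  · intro α hα
    have : α = 0 := le_antisymm (h0 ▸ hα.2) hα.1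
    subst this; exact huniq0
  set P : ℝ → Prop := fun t => ∃! w : Fin N → ℝ, (∀ i, 0 < w i) ∧ G w t = 0 with hP
  set T := Icc (0:ℝ) α₀ with hT
  set K : Set (Fin N → ℝ) := univ.pi (fun _ => Icc wlo whi) with hKdef
  have hKcomp : IsCompact K := isCompact_univ_pi fun _ => isCompact_Icc
  have hKmem : ∀ t ∈ T, ∀ v : Fin N → ℝ, (∀ i, 0 < v i) → G v t = 0 → v ∈ K :=
    fun t ht v hv hz => fun i _ => hzeros t ht v hv hz i
  have hKpos : ∀ v ∈ K, ∀ i, 0 < v i := fun v hv i =>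
    lt_of_lt_of_le hlo (hv i (mem_univ i)).1
  -- openness
  have hopen : ∀ t ∈ T, P t → ∃ δ > 0, ∀ t' ∈ T, |t' - t| < δ → P t' := by
    intro t ht hPt
    obtain ⟨w₀, ⟨hw₀pos, hw₀z⟩, huni⟩ := hPt
    obtain ⟨ε, hεpos, hερ, hballpos, δ, hδpos, hkey⟩ :=
      key hα₀pos hG ht hw₀pos hw₀z (hjac t ht w₀ hw₀pos hw₀z) 1 one_pos
    -- all zeros for nearby parameters lie in the ball
    have hδ' : ∃ δ' > 0, ∀ t' ∈ T, |t' - t| < δ' →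
        ∀ v : Fin N → ℝ, (∀ i, 0 < v i) → G v t' = 0 → v ∈ closedBall w₀ ε := by
      by_contra hcon
      push_neg at hcon
      have h' : ∀ n : ℕ, ∃ t' ∈ T, |t' - t| < 1/(n+1) ∧
          ∃ v : Fin N → ℝ, (∀ i, 0 < v i) ∧ G v t' = 0 ∧ v ∉ closedBall w₀ ε := by
        intro n
        obtain ⟨t', ht', hd, v, h1, h2, h3⟩ := hcon (1/(n+1)) (by positivity)
        exact ⟨t', ht', hd, v, h1, h2, h3⟩
      choose βs hβT hβd vs hvpos hvz hvout using h'
      have hvK : ∀ n, vs n ∈ K := fun n => hKmem _ (hβT n) _ (hvpos n) (hvz n)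
      obtain ⟨v, hvKmem, φ, hφ, hconv⟩ := hKcomp.tendsto_subseq hvK
      have hβtend : Tendsto βs atTop (nhds t) := by
        rw [tendsto_iff_dist_tendsto_zero]
        apply squeeze_zero (fun n => dist_nonneg) (fun n => ?_)
          tendsto_one_div_add_atTop_nhds_zero_nat
        rw [Real.dist_eq]; exact le_of_lt (hβd n)
      have hβφ : Tendsto (βs ∘ φ) atTop (nhds t) := hβtend.comp hφ.tendsto_atTop
      have hvz' : G v t = 0 := limit_zero hG (fun n => hvpos (φ n)) (fun n => hβT (φ n))
        (fun n => hvz (φ n)) hconv hβφ (hKpos v hvKmem) ht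
      have hveq : v = w₀ := huni v ⟨hKpos v hvKmem, hvz'⟩
      have hdist : Tendsto (fun n => dist (vs (φ n)) w₀) atTop (nhds 0) := by
        have := hconv.dist (tendsto_const_nhds (x := w₀))
        rwa [hveq, dist_self] at this
      have : ∀ᶠ n in atTop, dist (vs (φ n)) w₀ < ε :=
        hdist.eventually (eventually_lt_nhds hεpos)
      obtain ⟨n, hn⟩ := this.exists
      exact hvout (φ n) (mem_closedBall.2 (le_of_lt hn))
    obtain ⟨δ', hδ'pos, hδ'⟩ := hδ'
    refine ⟨min δ δ', lt_min hδpos hδ'pos, fun t' ht' hd => ?_⟩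
    obtain ⟨v, hvball, hvz, hvuni⟩ := hkey t' ht' (lt_of_lt_of_le hd (min_le_left _ _))
    refine ⟨v, ⟨hballpos v hvball, hvz⟩, fun y ⟨hypos, hyz⟩ => ?_⟩
    exact hvuni y (hδ' t' ht' (lt_of_lt_of_le hd (min_le_right _ _)) y hypos hyz) hyz
  -- closedness
  have hclosed : ∀ t ∈ T, ∀ u : ℕ → ℝ, (∀ n, u n ∈ T) → (∀ n, P (u n)) →
      Tendsto u atTop (nhds t) → P t := by
    intro t ht u huT huP htend
    -- existence of a zero at t
    have hex : ∃ z : Fin N → ℝ, (∀ i, 0 < z i) ∧ G z t = 0 := by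
      choose zs hzs using fun n => (huP n).exists
      have hzK : ∀ n, zs n ∈ K := fun n => hKmem _ (huT n) _ (hzs n).1 (hzs n).2
      obtain ⟨z, hzKmem, φ, hφ, hconv⟩ := hKcomp.tendsto_subseq hzK
      have : G z t = 0 := limit_zero hG (fun n => (hzs (φ n)).1) (fun n => huT (φ n))
        (fun n => (hzs (φ n)).2) hconv (htend.comp hφ.tendsto_atTop) (hKpos z hzKmem) ht
      exact ⟨z, hKpos z hzKmem, this⟩
    obtain ⟨z, hzpos, hzz⟩ := hex
    -- uniqueness of zeros at t
    have huni : ∀ y y' : Fin N → ℝ, (∀ i, 0 < y i) → G y t = 0 →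
        (∀ i, 0 < y' i) → G y' t = 0 → y = y' := by
      intro y y' hy hyz hy' hy'z
      by_contra hne
      have hρ : 0 < dist y y' / 3 := by
        have := dist_pos.2 hne; linarith
      obtain ⟨ε₁, hε₁pos, hε₁ρ, hb₁, δ₁, hδ₁pos, hkey₁⟩ :=
        key hα₀pos hG ht hy hyz (hjac t ht y hy hyz) _ hρ
      obtain ⟨ε₂, hε₂pos, hε₂ρ, hb₂, δ₂, hδ₂pos, hkey₂⟩ :=
        key hα₀pos hG ht hy' hy'z (hjac t ht y' hy' hy'z) _ hρ
      obtain ⟨n₀, hn₀⟩ := Metric.tendsto_atTop.1 htend (min δ₁ δ₂) (lt_min hδ₁pos hδ₂pos)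
      have hd := hn₀ n₀ le_rfl
      rw [Real.dist_eq] at hd
      obtain ⟨a, haball, haz, -⟩ := hkey₁ (u n₀) (huT n₀)
        (lt_of_lt_of_le hd (min_le_left _ _))
      obtain ⟨b, hbball, hbz, -⟩ := hkey₂ (u n₀) (huT n₀)
        (lt_of_lt_of_le hd (min_le_right _ _))
      have hab : a = b := by
        obtain ⟨x, -, hxuni⟩ := huP n₀
        rw [hxuni a ⟨hb₁ a haball, haz⟩, hxuni b ⟨hb₂ b hbball, hbz⟩]
      have : dist y y' ≤ ε₁ + ε₂ := by
        have h1 : dist y a ≤ ε₁ := by rw [dist_comm]; exact mem_closedBall.1 haball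
        have h2 : dist a y' ≤ ε₂ := by rw [hab]; exact mem_closedBall.1 hbball
        calc dist y y' ≤ dist y a + dist a y' := dist_triangle _ _ _
          _ ≤ ε₁ + ε₂ := add_le_add h1 h2
      have := dist_pos.2 hne
      linarith
    exact ⟨z, ⟨hzpos, hzz⟩, fun y ⟨hypos, hyz⟩ => huni y z hypos hyz hzpos hzz⟩
  -- clopen argument on the subtype
  haveI : PreconnectedSpace ↥T := Subtype.preconnectedSpace isPreconnected_Icc
  set A' : Set ↥T := {x | P x.1} with hA'
  have hA'open : IsOpen A' := by
    rw [Metric.isOpen_iff]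
    intro x hx
    obtain ⟨δ, hδpos, h⟩ := hopen x.1 x.2 hx
    refine ⟨δ, hδpos, fun y hy => ?_⟩
    rw [mem_ball, Subtype.dist_eq, Real.dist_eq] at hy
    exact h y.1 y.2 hy
  have hA'closed : IsClosed A' := by
    apply IsSeqClosed.isClosed
    intro u x hu hux
    have hval : Tendsto (fun n => (u n).1) atTop (nhds x.1) :=
      ((continuous_subtype_val.tendsto x).comp hux)
    exact hclosed x.1 x.2 (fun n => (u n).1) (fun n => (u n).2) hu hval
  have h0T : (0:ℝ) ∈ T := ⟨le_refl 0, le_of_lt hα₀pos⟩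
  have hne : A'.Nonempty := ⟨⟨0, h0T⟩, huniq0⟩
  have huniv : A' = univ := IsClopen.eq_univ ⟨hA'closed, hA'open⟩ hne
  intro α hα
  have : (⟨α, hα⟩ : ↥T) ∈ A' := huniv ▸ mem_univ _
  exact this
end
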